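/- Let V be a nonzero finite-dimensional complex vector space and U, W invertible linear endomorphisms of V with UW = ωWU and U^N = W^N = 1, such that the only subspaces of V invariant under both U and W are 0 and V (irreducibility). Then dim V = N. Moreover, if (V', U', W') is another such irreducible triple, there exists a linear isomorphism f : V → V' with f∘U = U'∘f and f∘W = W'∘f; i.e. the cyclic Weyl algebra at a primitive N-th root of unity has a unique irreducible finite-dimensional representation up to isomorphism. -/

import Mathlib

/-- A representation of the cyclic Weyl algebra at `ω` on `V`: a pair of endomorphisms
`U`, `W` with `UW = ω WU` and `U^N = W^N = 1`. -/
def IsCyclicWeylRep {V : Type*} [AddCommGroup V] [Module ℂ V]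
    (ω : ℂ) (N : ℕ) (U W : Module.End ℂ V) : Prop :=
  U * W = ω • (W * U) ∧ U ^ N = 1 ∧ W ^ N = 1

/-- Irreducibility: the only subspaces invariant under both `U` and `W` are `⊥` and `⊤`. -/
def IsIrreducibleRep {V : Type*} [AddCommGroup V] [Module ℂ V]
    (U W : Module.End ℂ V) : Prop :=
  ∀ S : Submodule ℂ V, (∀ v ∈ S, U v ∈ S) → (∀ v ∈ S, W v ∈ S) → S = ⊥ ∨ S = ⊤

section CyclicWeylAux
set_option linter.unusedSectionVars false

variable {V : Type*} [AddCommGroup V] [Module ℂ V] [FiniteDimensional ℂ V]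

lemma weyl_mul_pow {ω : ℂ} {U W : Module.End ℂ V}
    (h : U * W = ω • (W * U)) (m : ℕ) :
    U * W ^ m = (ω ^ m) • (W ^ m * U) := by
  induction m with
  | zero => simp
  | succ m ih =>
    calc U * W ^ (m + 1) = (U * W ^ m) * W := by rw [pow_succ, mul_assoc]
    _ = (ω ^ m) • (W ^ m * U * W) := by rw [ih, smul_mul_assoc]
    _ = (ω ^ m) • (W ^ m * (ω • (W * U))) := by rw [mul_assoc, h]
    _ = (ω ^ (m + 1)) • (W ^ (m + 1) * U) := by
        rw [mul_smul_comm, smul_smul, ← mul_assoc, ← pow_succ, ← pow_succ]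

lemma weyl_pow_apply {ω : ℂ} {U W : Module.End ℂ V} {μ : ℂ} {x : V}
    (h : U * W = ω • (W * U)) (hUx : U x = μ • x) (m : ℕ) :
    U ((W ^ m) x) = (ω ^ m * μ) • (W ^ m) x := by
  have h1 : U ((W ^ m) x) = (U * (W ^ m)) x := rfl
  rw [h1, weyl_mul_pow h m]
  show (ω ^ m) • (W ^ m) (U x) = _
  rw [hUx, map_smul, smul_smul]

lemma weyl_pow_ne_zero {N : ℕ} {W : Module.End ℂ V} (hWN : W ^ N = 1)
    {x : V} (hx : x ≠ 0) {k : ℕ} (hk : k ≤ N) : (W ^ k) x ≠ 0 := by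
  intro h0
  apply hx
  have : ((W ^ (N - k)) * (W ^ k)) x = x := by
    rw [← pow_add, Nat.sub_add_cancel hk, hWN]; rfl
  rw [← this]
  show (W ^ (N - k)) ((W ^ k) x) = 0
  rw [h0, map_zero]

lemma weyl_exists_eigvec
    {N : ℕ} (hN : 2 ≤ N) {ω : ℂ} (hω : IsPrimitiveRoot ω N)
    [Nontrivial V] {U W : Module.End ℂ V} (hrep : IsCyclicWeylRep ω N U W)
    (μ : ℂ) (hμ : μ ^ N = 1) : ∃ x : V, x ≠ 0 ∧ U x = μ • x := by
  haveI : NeZero N := ⟨by omega⟩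
  obtain ⟨hcomm, hUN, hWN⟩ := hrep
  obtain ⟨ν, hν⟩ := Module.End.exists_eigenvalue U
  obtain ⟨x, hx⟩ := hν.exists_hasEigenvector
  have hx0 : x ≠ 0 := hx.right
  have hUx : U x = ν • x := hx.apply_eq_smul
  have hνN : ν ^ N = 1 := by
    have h1 : x = ν ^ N • x := by
      have h0 : (U ^ N) x = ν ^ N • x := hx.pow_apply N
      rw [hUN] at h0
      simpa using h0
    have h2 : (ν ^ N - 1) • x = 0 := by
      rw [sub_smul, one_smul, ← h1, sub_self]
    rcases smul_eq_zero.mp h2 with h | h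
    · exact sub_eq_zero.mp h
    · exact absurd h hx0
  have hν0 : ν ≠ 0 := by
    intro h; rw [h, zero_pow (NeZero.ne N)] at hνN; exact zero_ne_one hνN
  have hratio : (μ * ν⁻¹) ^ N = 1 := by
    rw [mul_pow, hμ, inv_pow, hνN, inv_one, one_mul]
  obtain ⟨k, hk, hkeq⟩ := hω.eq_pow_of_pow_eq_one hratio
  refine ⟨(W ^ k) x, weyl_pow_ne_zero hWN hx0 hk.le, ?_⟩
  rw [weyl_pow_apply hcomm hUx k, hkeq]
  field_simp

lemma weyl_exists_basis
    {N : ℕ} [NeZero N] (hN : 2 ≤ N) {ω : ℂ} (hω : IsPrimitiveRoot ω N)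
    [Nontrivial V] {U W : Module.End ℂ V} (hrep : IsCyclicWeylRep ω N U W)
    (hirr : IsIrreducibleRep U W) (μ : ℂ) (hμ : μ ^ N = 1) :
    ∃ b : Module.Basis (Fin N) ℂ V, (∀ k : Fin N, U (b k) = (ω ^ (k : ℕ) * μ) • b k) ∧
      (∀ k : Fin N, W (b k) = b (k + 1)) := by
  obtain ⟨x, hx0, hUx⟩ := weyl_exists_eigvec hN hω hrep μ hμ
  obtain ⟨hcomm, hUN, hWN⟩ := hrep
  have hμ0 : μ ≠ 0 := by
    intro h; rw [h, zero_pow (NeZero.ne N)] at hμ; exact zero_ne_one hμ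
  set c : Fin N → V := fun k => (W ^ (k : ℕ)) x with hc
  have hcnz : ∀ k : Fin N, c k ≠ 0 := fun k => weyl_pow_ne_zero hWN hx0 k.isLt.le
  have hUc : ∀ k : Fin N, U (c k) = (ω ^ (k : ℕ) * μ) • c k :=
    fun k => weyl_pow_apply hcomm hUx (k : ℕ)
  have hWc : ∀ k : Fin N, W (c k) = c (k + 1) := by
    intro k
    show W ((W ^ (k : ℕ)) x) = (W ^ (((k + 1 : Fin N)) : ℕ)) x
    have h1 : (((k + 1 : Fin N)) : ℕ) = ((k : ℕ) + 1) % N := by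
      rw [Fin.add_def]
      simp [Nat.mod_eq_of_lt (show 1 < N by omega)]
    rw [h1, ← pow_eq_pow_mod _ hWN]
    show W ((W ^ (k : ℕ)) x) = (W ^ ((k : ℕ) + 1)) x
    rw [pow_succ']
    rfl
  have hLI : LinearIndependent ℂ c := by
    apply U.eigenvectors_linearIndependent' (fun k : Fin N => ω ^ (k : ℕ) * μ) ?_ c ?_
    · intro i j hij
      have h2 : ω ^ (i : ℕ) = ω ^ (j : ℕ) := mul_right_cancel₀ hμ0 hij
      exact Fin.ext (hω.pow_inj i.isLt j.isLt h2)
    · intro k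
      exact ⟨Module.End.mem_eigenspace_iff.mpr (hUc k), hcnz k⟩
  have hSinv : ∀ (f : Module.End ℂ V),
      (∀ k : Fin N, f (c k) ∈ Submodule.span ℂ (Set.range c)) →
      ∀ v ∈ Submodule.span ℂ (Set.range c), f v ∈ Submodule.span ℂ (Set.range c) := by
    intro f hf v hv
    have hmap : Submodule.map f (Submodule.span ℂ (Set.range c)) ≤
        Submodule.span ℂ (Set.range c) := by
      rw [Submodule.map_span]
      apply Submodule.span_le.mpr
      rintro _ ⟨_, ⟨k, rfl⟩, rfl⟩
      exact hf k
    exact hmap ⟨v, hv, rfl⟩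
  have hspan : Submodule.span ℂ (Set.range c) = ⊤ := by
    rcases hirr (Submodule.span ℂ (Set.range c))
        (hSinv U fun k => by
          rw [hUc k]
          exact Submodule.smul_mem _ _ (Submodule.subset_span ⟨k, rfl⟩))
        (hSinv W fun k => by
          rw [hWc k]
          exact Submodule.subset_span ⟨k + 1, rfl⟩) with h | h
    · exfalso
      have hm : c 0 ∈ Submodule.span ℂ (Set.range c) :=
        Submodule.subset_span ⟨0, rfl⟩
      rw [h, Submodule.mem_bot] at hm
      exact hcnz 0 hm
    · exact h
  refine ⟨Module.Basis.mk hLI (by rw [hspan]), ?_, ?_⟩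
  · intro k; simp only [Module.Basis.coe_mk]; exact hUc k
  · intro k; simp only [Module.Basis.coe_mk]; exact hWc k

end CyclicWeylAux

/-- The cyclic Weyl algebra at a primitive `N`-th root of unity has a unique irreducible
finite-dimensional representation up to isomorphism: any irreducible representation on a
nonzero finite-dimensional complex vector space has dimension `N`, and any two such are
intertwined by a linear isomorphism. -/
theorem cyclic_weyl_unique_irreducible_rep
    (N : ℕ) (hN : 2 ≤ N) (ω : ℂ) (hω : IsPrimitiveRoot ω N)
    {V : Type*} [AddCommGroup V] [Module ℂ V] [FiniteDimensional ℂ V] [Nontrivial V]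
    (U W : Module.End ℂ V)
    (hrep : IsCyclicWeylRep ω N U W) (hirr : IsIrreducibleRep U W) :
    Module.finrank ℂ V = N ∧
    ∀ {V' : Type*} [AddCommGroup V'] [Module ℂ V'] [FiniteDimensional ℂ V'] [Nontrivial V']
      (U' W' : Module.End ℂ V'),
      IsCyclicWeylRep ω N U' W' → IsIrreducibleRep U' W' →
      ∃ f : V ≃ₗ[ℂ] V', (∀ v : V, f (U v) = U' (f v)) ∧ (∀ v : V, f (W v) = W' (f v)) := by
  haveI : NeZero N := ⟨by omega⟩
  obtain ⟨b, hUb, hWb⟩ := weyl_exists_basis hN hω hrep hirr 1 (one_pow N)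
  constructor
  · rw [Module.finrank_eq_card_basis b, Fintype.card_fin]
  · intro V' _ _ _ _ U' W' hrep' hirr'
    obtain ⟨b', hUb', hWb'⟩ := weyl_exists_basis hN hω hrep' hirr' 1 (one_pow N)
    set f : V ≃ₗ[ℂ] V' := b.equiv b' (Equiv.refl _) with hf
    have hfb : ∀ k : Fin N, f (b k) = b' k := fun k => b.equiv_apply k b' (Equiv.refl _)
    refine ⟨f, ?_, ?_⟩
    · have h : (U'.comp (f.toLinearMap) : V →ₗ[ℂ] V') = f.toLinearMap.comp U := by
        apply b.ext
        intro k
        simp only [LinearMap.comp_apply, LinearEquiv.coe_coe, hfb, hUb, hUb', map_smul]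
      intro v
      exact (LinearMap.congr_fun h v).symm
    · have h : (W'.comp (f.toLinearMap) : V →ₗ[ℂ] V') = f.toLinearMap.comp W := by
        apply b.ext
        intro k
        simp only [LinearMap.comp_apply, LinearEquiv.coe_coe, hfb, hWb, hWb']
      intro v
      exact (LinearMap.congr_fun h v).symm
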